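/- For the pull-stream representation of an array, folding equals the standard array fold: for any array `arr : Array α`, function `f : β → α → β`, and initial value `z : β`, folding the pull stream `of_arr arr` (whose state is a natural-number index starting at 0, and whose step function at state `i` returns `Cons (arr[i], i+1)` if `i < arr.size` and `Nil` otherwise) with `f` and `z` equals `arr.foldl f z`. -/

import Mathlib

/-- Fold of the pull stream `of_arr arr`: state is a natural-number index,
    step at `i` yields `some (arr[i], i+1)` if `i < arr.size`, else `none`. -/
def foldOfArr {α β : Type} (arr : Array α) (f : β → α → β) : β → ℕ → β :=
  fun z i =>
    if h : i < arr.size then foldOfArr arr f (f z arr[i]) (i + 1) else z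
termination_by _ i => arr.size - i
decreasing_by omega

lemma foldOfArr_eq_drop {α β : Type} (arr : Array α) (f : β → α → β) :
    ∀ i z, foldOfArr arr f z i = (arr.toList.drop i).foldl f z := by
  suffices h : ∀ n i z, arr.size - i ≤ n →
      foldOfArr arr f z i = (arr.toList.drop i).foldl f z by
    intro i z; exact h (arr.size - i) i z le_rfl
  intro n
  induction n with
  | zero =>
    intro i z hle
    rw [foldOfArr]
    rw [dif_neg (by omega)]
    rw [List.drop_eq_nil_of_le (by simpa using by omega : arr.toList.length ≤ i)]
    rfl
  | succ n ih =>
    intro i z hle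
    rw [foldOfArr]
    split
    · next h =>
      rw [ih (i+1) (f z arr[i]) (by omega),
        List.drop_eq_getElem_cons (by simpa using h : i < arr.toList.length)]
      simp
    · next h =>
      rw [List.drop_eq_nil_of_le (by simpa using Nat.le_of_not_lt h)]
      rfl

theorem fold_of_arr_eq_foldl {α β : Type} (arr : Array α) (f : β → α → β) (z : β) :
    foldOfArr arr f z 0 = arr.foldl f z := by
  rw [foldOfArr_eq_drop]
  simp [Array.foldl_toList]
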